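/- Let k be an algebraically closed field of characteristic zero, r a positive integer, and ρ̄ : SL₂(ℤ) → PGL_r(k) a projective representation whose kernel is a congruence subgroup of level n. Let ρ̄_n : SL₂(ℤ/nℤ) → PGL_r(k) be the unique projective representation with ρ̄ = ρ̄_n ∘ π_n. Then ρ̄_n lifts to a group homomorphism SL₂(ℤ/nℤ) → GL_r(k) if, and only if, ρ̄ admits a lifting ρ : SL₂(ℤ) → GL_r(k) whose kernel is a congruence subgroup of level n. -/

import Mathlib

open Matrix

/-- The principal congruence subgroup `Γ(n)`, the kernel of reduction mod `n`. -/
def GammaSL (n : ℕ) : Subgroup (SpecialLinearGroup (Fin 2) ℤ) :=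
  (SpecialLinearGroup.map (Int.castRingHom (ZMod n))).ker

/-- `L` is a congruence subgroup of level `n`: `n` is the least positive integer with
`Γ(n) ≤ L`. -/
def IsCongruenceLevel (L : Subgroup (SpecialLinearGroup (Fin 2) ℤ)) (n : ℕ) : Prop :=
  0 < n ∧ GammaSL n ≤ L ∧ ∀ m : ℕ, 0 < m → GammaSL m ≤ L → n ≤ m

/-- Given integers `a b n` with `b ≠ 0` such that no prime divides all three, there is `k`
with `a + k * n` coprime to `b`. -/
lemma exists_coprime_add_mul (a b n : ℤ) (hb : b ≠ 0)
    (h : ∀ p : ℕ, p.Prime → (p : ℤ) ∣ a → (p : ℤ) ∣ b → ¬ (p : ℤ) ∣ n) :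
    ∃ k : ℤ, IsCoprime (a + k * n) b := by
  classical
  set ps : Finset ℕ := b.natAbs.primeFactors.filter (fun p : ℕ => ¬ ((p : ℤ) ∣ a)) with hps
  set K : ℕ := ps.prod id with hK
  refine ⟨(K : ℤ), ?_⟩
  rw [Int.isCoprime_iff_gcd_eq_one]
  by_contra hg
  obtain ⟨p, pp, hpd⟩ := Nat.exists_prime_and_dvd hg
  have ppz : Prime (p : ℤ) := Nat.prime_iff_prime_int.mp pp
  have hp1 : (p : ℤ) ∣ a + (K : ℤ) * n :=
    dvd_trans (Int.natCast_dvd_natCast.mpr hpd) (Int.gcd_dvd_left _ _)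
  have hpb : (p : ℤ) ∣ b :=
    dvd_trans (Int.natCast_dvd_natCast.mpr hpd) (Int.gcd_dvd_right _ _)
  by_cases hpa : (p : ℤ) ∣ a
  · have hpk : (p : ℤ) ∣ (K : ℤ) * n := (dvd_add_right hpa).mp hp1
    rcases ppz.dvd_mul.mp hpk with h' | h'
    · have hpK : p ∣ K := Int.ofNat_dvd.mp h'
      obtain ⟨q, hq, hq'⟩ := (pp.prime.dvd_finset_prod_iff id).mp hpK
      have hq2 := Finset.mem_filter.mp hq
      have hqp : q.Prime := Nat.prime_of_mem_primeFactors hq2.1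
      have : p = q := (Nat.prime_dvd_prime_iff_eq pp hqp).mp hq'
      exact hq2.2 (this ▸ hpa)
    · exact h p pp hpa hpb h'
  · have hpbn : p ∣ b.natAbs := by
      rw [← Int.natAbs_natCast p]
      exact Int.natAbs_dvd_natAbs.mpr hpb
    have hmem : p ∈ ps :=
      Finset.mem_filter.mpr
        ⟨Nat.mem_primeFactors.mpr ⟨pp, hpbn, Int.natAbs_ne_zero.mpr hb⟩, hpa⟩
    have hpK : p ∣ K := Finset.dvd_prod_of_mem id hmem
    have : (p : ℤ) ∣ (K : ℤ) * n := (Int.ofNat_dvd.mpr hpK).mul_right n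
    exact hpa (by simpa using dvd_sub hp1 this)

/-- Reduction mod `n` is surjective on `SL₂`. -/
lemma SL2_map_surjective (n : ℕ) (hn : 0 < n) :
    Function.Surjective
      ((SpecialLinearGroup.map (Int.castRingHom (ZMod n))) :
        SpecialLinearGroup (Fin 2) ℤ →* SpecialLinearGroup (Fin 2) (ZMod n)) := by
  intro A
  set a : ℤ := ZMod.cast (A.1 0 0)
  set b : ℤ := ZMod.cast (A.1 0 1)
  set c : ℤ := ZMod.cast (A.1 1 0)
  set d : ℤ := ZMod.cast (A.1 1 1)
  have hdetA : A.1 0 0 * A.1 1 1 - A.1 0 1 * A.1 1 0 = 1 := by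
    have := A.2; rwa [Matrix.det_fin_two] at this
  have hdet : (n : ℤ) ∣ a * d - b * c - 1 := by
    rw [← ZMod.intCast_zmod_eq_zero_iff_dvd]
    push_cast
    simp only [a, b, c, d, ZMod.intCast_zmod_cast]
    rw [hdetA]; ring
  -- a nonzero lift of b
  set b' : ℤ := if b = 0 then (n : ℤ) else b with hb'def
  have hb' : b' ≠ 0 := by
    rcases eq_or_ne b 0 with h | h <;> simp [hb'def, h]
    · exact_mod_cast hn.ne'
  have hbcong : (n : ℤ) ∣ b' - b := by
    rcases eq_or_ne b 0 with h | h <;> simp [hb'def, h]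
  have hprime : ∀ p : ℕ, p.Prime → (p : ℤ) ∣ a → (p : ℤ) ∣ b' → ¬ (p : ℤ) ∣ n := by
    intro p pp hpa hpb' hpn
    have hpb : (p : ℤ) ∣ b := by
      have := dvd_sub hpb' (hpn.trans hbcong)
      simpa using this
    have : (p : ℤ) ∣ 1 := by
      have h1 : (p : ℤ) ∣ a * d - b * c - 1 := hpn.trans hdet
      have h2 : (p : ℤ) ∣ a * d - b * c := dvd_sub (hpa.mul_right d) (hpb.mul_right c)
      simpa using dvd_sub h2 h1
    exact pp.one_lt.ne' (by exact_mod_cast Int.eq_one_of_dvd_one (by positivity) this)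
  obtain ⟨κ, hco⟩ := exists_coprime_add_mul a b' n hb' hprime
  set a' : ℤ := a + κ * n with ha'def
  have hacong : (n : ℤ) ∣ a' - a := ⟨κ, by ring⟩
  obtain ⟨x, y, hxy⟩ := hco
  -- a' * v - b' * u = 1
  set v : ℤ := x
  set u : ℤ := -y
  have huv : a' * v - b' * u = 1 := by simp only [v, u]; linarith [hxy]
  have hkey : (n : ℤ) ∣ a' * (d - v) - b' * (c - u) := by
    have h1 : a' * (d - v) - b' * (c - u) =
        (a * d - b * c - 1) + (a' - a) * d - (b' - b) * c := by
      rw [show (1 : ℤ) = a' * v - b' * u from huv.symm]; ring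
    rw [h1]
    exact dvd_sub (dvd_add hdet (hacong.mul_right d)) (hbcong.mul_right c)
  set t : ℤ := (c - u) * v - (d - v) * u with htdef
  set c' : ℤ := u + t * a' with hc'def
  set d' : ℤ := v + t * b' with hd'def
  have hccong : (n : ℤ) ∣ c' - c := by
    have h1 : c' - c = -(u * (a' * (d - v) - b' * (c - u))) := by
      simp only [hc'def, htdef]
      linear_combination (c - u) * huv
    rw [h1]
    exact dvd_neg.mpr (hkey.mul_left u)
  have hdcong : (n : ℤ) ∣ d' - d := by
    have h1 : d' - d = -(v * (a' * (d - v) - b' * (c - u))) := by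
      simp only [hd'def, htdef]
      linear_combination (d - v) * huv
    rw [h1]
    exact dvd_neg.mpr (hkey.mul_left v)
  refine ⟨⟨!![a', b'; c', d'], by rw [Matrix.det_fin_two_of]; linear_combination huv⟩, ?_⟩
  have cast_eq : ∀ z w : ℤ, (n : ℤ) ∣ z - w → ((z : ZMod n) = (w : ZMod n)) := by
    intro z w hzw
    have := (ZMod.intCast_zmod_eq_zero_iff_dvd (z - w) n).mpr hzw
    push_cast at this
    linear_combination this
  have e00 : ((a' : ℤ) : ZMod n) = A.1 0 0 := by
    rw [cast_eq a' a hacong]; exact ZMod.intCast_zmod_cast _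
  have e01 : ((b' : ℤ) : ZMod n) = A.1 0 1 := by
    rw [cast_eq b' b hbcong]; exact ZMod.intCast_zmod_cast _
  have e10 : ((c' : ℤ) : ZMod n) = A.1 1 0 := by
    rw [cast_eq c' c hccong]; exact ZMod.intCast_zmod_cast _
  have e11 : ((d' : ℤ) : ZMod n) = A.1 1 1 := by
    rw [cast_eq d' d hdcong]; exact ZMod.intCast_zmod_cast _
  apply Subtype.ext
  change Matrix.map !![a', b'; c', d'] (Int.castRingHom (ZMod n)) = A.1
  ext i j
  rw [Matrix.map_apply]
  fin_cases i <;> fin_cases j <;>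
    simp only [Matrix.cons_val_zero, Matrix.cons_val_one, Matrix.head_cons, Matrix.of_apply,
      Matrix.cons_val', Matrix.empty_val', Matrix.cons_val_fin_one, Int.coe_castRingHom,
      Fin.zero_eta, Fin.mk_one]
  · exact e00
  · exact e01
  · exact e10
  · exact e11

/-- Let `ρ̄ : SL₂(ℤ) → PGL_r(k)` be a projective representation whose kernel is a congruence
subgroup of level `n`, and let `ρ̄ₙ : SL₂(ℤ/nℤ) → PGL_r(k)` satisfy `ρ̄ = ρ̄ₙ ∘ πₙ`.  Then `ρ̄ₙ`
lifts to `GL_r(k)` iff `ρ̄` admits a lifting whose kernel is a congruence subgroup of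
level `n`. -/
theorem lifting_iff_level_n (k : Type) [Field k] [IsAlgClosed k] [CharZero k]
    (r : ℕ) (hr : 0 < r) (n : ℕ)
    (ρbar : SpecialLinearGroup (Fin 2) ℤ →* (GL (Fin r) k ⧸ Subgroup.center (GL (Fin r) k)))
    (hker : IsCongruenceLevel ρbar.ker n)
    (ρbarn : SpecialLinearGroup (Fin 2) (ZMod n) →*
      (GL (Fin r) k ⧸ Subgroup.center (GL (Fin r) k)))
    (hfac : ρbar = ρbarn.comp (SpecialLinearGroup.map (Int.castRingHom (ZMod n)))) :
    (∃ f : SpecialLinearGroup (Fin 2) (ZMod n) →* GL (Fin r) k,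
        (QuotientGroup.mk' (Subgroup.center (GL (Fin r) k))).comp f = ρbarn) ↔
    (∃ ρ : SpecialLinearGroup (Fin 2) ℤ →* GL (Fin r) k,
        (QuotientGroup.mk' (Subgroup.center (GL (Fin r) k))).comp ρ = ρbar ∧
        IsCongruenceLevel ρ.ker n) := by
  set π : SpecialLinearGroup (Fin 2) ℤ →* SpecialLinearGroup (Fin 2) (ZMod n) :=
    SpecialLinearGroup.map (Int.castRingHom (ZMod n)) with hπ
  have hπker : π.ker = GammaSL n := rfl
  constructor
  · rintro ⟨f, hf⟩
    refine ⟨f.comp π, ?_, hker.1, ?_, ?_⟩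
    · rw [← MonoidHom.comp_assoc, hf, ← hfac]
    · intro g hg
      have hg1 : π g = 1 := hg
      rw [MonoidHom.mem_ker, MonoidHom.comp_apply, hg1]
      exact _root_.map_one f
    · intro m hm hle
      refine hker.2.2 m hm ?_
      intro g hg
      have h3 : (f.comp π) g = 1 := hle hg
      rw [MonoidHom.mem_ker, hfac]
      have h2 := congrFun (congrArg DFunLike.coe hf) (π g)
      simp only [MonoidHom.comp_apply] at h2 h3 ⊢
      rw [← h2, h3]
      exact _root_.map_one _
  · rintro ⟨ρ, hρ, hn, hΓ, _⟩
    have hsurj := SL2_map_surjective n hn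
    have hle : π.ker ≤ ρ.ker := by rw [hπker]; exact hΓ
    set finv := Function.surjInv hsurj with hfinv
    have hri : Function.RightInverse finv π := Function.rightInverse_surjInv hsurj
    refine ⟨π.liftOfRightInverse finv hri ⟨ρ, hle⟩, ?_⟩
    ext g
    obtain ⟨x, rfl⟩ := hsurj g
    have h1 : (π.liftOfRightInverse finv hri ⟨ρ, hle⟩) (π x) = ρ x :=
      MonoidHom.liftOfRightInverse_comp_apply π finv hri ⟨ρ, hle⟩ x
    simp only [MonoidHom.comp_apply, h1]
    have h2 := congrFun (congrArg DFunLike.coe hρ) x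
    simp only [MonoidHom.comp_apply] at h2
    rw [show (SpecialLinearGroup.map (Int.castRingHom (ZMod n))) x = π x from rfl, h1, h2, hfac]
    rfl
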